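/- Let A be a real r×d matrix and b ∈ ℝ^r, let F and S be index sets with S nonempty, let x^s ∈ ℝ^d for each s ∈ S satisfy A x^s ≤ b, let w^f : ℝ^d → ℝ be an affine function for each f ∈ F, and let C : F → ℝ satisfy: for every f ∈ F and every x ∈ ℝ^d with Ax ≤ b one has w^f(x) ≤ C(f). Then there exist nonnegative reals T(f,j) (f ∈ F, j ∈ [r]) and μ(f) ≥ 0 (f ∈ F) such that for all f ∈ F and s ∈ S: C(f) − w^f(x^s) = Σ_{j=1}^{r} T(f,j) · (b_j − A_j x^s) + μ(f). In particular, setting U(j,s) := b_j − A_j x^s ≥ 0, the matrix M(f,s) := C(f) − w^f(x^s) admits the factorization M = TU + μ𝟙 with T, U, μ entrywise nonnegative. -/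

import Mathlib

open Matrix
open Finset
open scoped RealInnerProductSpace

/-- Conic Carathéodory: any nonnegative combination can be rewritten as a nonnegative
combination supported on a linearly independent subfamily. -/
lemma conic_caratheodory {ι H : Type*} [Fintype ι] [DecidableEq ι]
    [AddCommGroup H] [Module ℝ H] (g : ι → H) :
    ∀ (n : ℕ) (t : ι → ℝ), (univ.filter fun i => t i ≠ 0).card ≤ n → (∀ i, 0 ≤ t i) →
    ∃ s : Finset ι, LinearIndependent ℝ (fun i : s => g i) ∧
      ∃ u : ι → ℝ, (∀ i, 0 ≤ u i) ∧ (∀ i ∉ s, u i = 0) ∧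
        ∑ i, u i • g i = ∑ i, t i • g i := by
  intro n
  induction n with
  | zero =>
    intro t hcard ht
    have hzero : ∀ i, t i = 0 := by
      intro i
      by_contra hi
      have : i ∈ univ.filter fun i => t i ≠ 0 := by simp [hi]
      have := Finset.card_pos.mpr ⟨i, this⟩
      omega
    refine ⟨∅, ?_, t, ht, fun i _ => hzero i, rfl⟩
    have : IsEmpty ((∅ : Finset ι) : Type _) := ⟨fun x => Finset.notMem_empty _ x.2⟩
    exact linearIndependent_empty_type
  | succ n ih =>
    intro t hcard ht
    set s₀ : Finset ι := univ.filter fun i => t i ≠ 0 with hs₀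
    by_cases hli : LinearIndependent ℝ (fun i : s₀ => g i)
    · refine ⟨s₀, hli, t, ht, fun i hi => ?_, rfl⟩
      by_contra h
      exact hi (by simp [hs₀, h])
    · obtain ⟨c, hcsum, i₁, hi₁⟩ := Fintype.not_linearIndependent_iff.mp hli
      -- extend `c` by zero, and flip sign if needed to get a positive entry
      set c' : ι → ℝ := fun i => if h : i ∈ s₀ then c ⟨i, h⟩ else 0 with hc'
      have hc'sum : ∑ i, c' i • g i = 0 := by
        have h1 : ∑ i ∈ s₀, c' i • g i = ∑ i, c' i • g i :=
          Finset.sum_subset (Finset.subset_univ s₀)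
            (fun i _ hi => by simp [hc', dif_neg hi])
        have h2 : ∑ i ∈ s₀.attach, c' i.1 • g i.1 = ∑ i ∈ s₀, c' i • g i :=
          Finset.sum_attach s₀ (fun i => c' i • g i)
        have h3 : ∑ i ∈ s₀.attach, c' i.1 • g i.1 = ∑ i : s₀, c i • g i.1 := by
          refine Finset.sum_congr rfl fun i _ => ?_
          simp [hc', dif_pos i.2]
        rw [← h1, ← h2, h3, hcsum]
      have hc'zero : ∀ i ∉ s₀, c' i = 0 := fun i hi => by simp [hc', dif_neg hi]
      have hc'ne : c' i₁.1 ≠ 0 := by simpa [hc', dif_pos i₁.2] using hi₁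
      obtain ⟨e, hesum, hezero, j₁, hj₁s, hj₁⟩ :
          ∃ e : ι → ℝ, ∑ i, e i • g i = 0 ∧ (∀ i ∉ s₀, e i = 0) ∧
            ∃ j, j ∈ s₀ ∧ 0 < e j := by
        rcases lt_or_gt_of_ne hc'ne with h | h
        · exact ⟨-c', by simp [hc'sum, neg_smul], fun i hi => by simp [hc'zero i hi],
            i₁.1, i₁.2, by simpa using h⟩
        · exact ⟨c', hc'sum, hc'zero, i₁.1, i₁.2, h⟩
      -- the positive part of `e` inside `s₀`
      set P : Finset ι := s₀.filter fun i => 0 < e i with hP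
      have hPne : P.Nonempty := ⟨j₁, by simp [hP, hj₁s, hj₁]⟩
      obtain ⟨i₀, hi₀P, hi₀min⟩ := Finset.exists_min_image P (fun i => t i / e i) hPne
      have hi₀s : i₀ ∈ s₀ := (Finset.mem_filter.mp hi₀P).1
      have hi₀pos : 0 < e i₀ := (Finset.mem_filter.mp hi₀P).2
      set lam : ℝ := t i₀ / e i₀ with hlam
      have hlam0 : 0 ≤ lam := div_nonneg (ht i₀) hi₀pos.le
      set t' : ι → ℝ := fun i => t i - lam * e i with ht'
      have ht'0 : ∀ i, 0 ≤ t' i := by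
        intro i
        rcases le_or_gt (e i) 0 with h | h
        · have : lam * e i ≤ 0 := mul_nonpos_of_nonneg_of_nonpos hlam0 h
          simp only [ht']; linarith [ht i]
        · have his : i ∈ s₀ := by
            by_contra hi
            exact absurd (hezero i hi) (ne_of_gt h)
          have hiP : i ∈ P := Finset.mem_filter.mpr ⟨his, h⟩
          have := hi₀min i hiP
          have : lam * e i ≤ t i := by
            rw [hlam] at this ⊢
            exact (le_div_iff₀ h).mp this
          simp only [ht']; linarith
      have ht'sum : ∑ i, t' i • g i = ∑ i, t i • g i := by
        simp only [ht', sub_smul, Finset.sum_sub_distrib, mul_smul]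
        rw [← Finset.smul_sum, hesum, smul_zero, sub_zero]
      have ht'supp : (univ.filter fun i => t' i ≠ 0) ⊆ s₀.erase i₀ := by
        intro i hi
        simp only [Finset.mem_filter] at hi
        refine Finset.mem_erase.mpr ⟨?_, ?_⟩
        · rintro rfl
          exact hi.2 (by simp [ht', hlam, div_mul_cancel₀ _ (ne_of_gt hi₀pos)])
        · by_contra his
          exact hi.2 (by simp [ht', hezero i his, (by simpa [hs₀] using his : t i = 0)])
      have hcard' : (univ.filter fun i => t' i ≠ 0).card ≤ n := by
        have h1 := Finset.card_le_card ht'supp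
        have h2 : (s₀.erase i₀).card = s₀.card - 1 := Finset.card_erase_of_mem hi₀s
        have h3 : 0 < s₀.card := Finset.card_pos.mpr ⟨i₀, hi₀s⟩
        omega
      obtain ⟨s, hsli, u, hu0, husupp, husum⟩ := ih t' hcard' ht'0
      exact ⟨s, hsli, u, hu0, husupp, by rw [husum, ht'sum]⟩

/-- A finitely generated cone in a finite-dimensional real normed space is closed. -/
lemma isClosed_fg_cone {ι H : Type*} [Fintype ι] [DecidableEq ι]
    [NormedAddCommGroup H] [NormedSpace ℝ H] [FiniteDimensional ℝ H] (g : ι → H) :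
    IsClosed {x : H | ∃ t : ι → ℝ, (∀ i, 0 ≤ t i) ∧ ∑ i, t i • g i = x} := by
  have hset : {x : H | ∃ t : ι → ℝ, (∀ i, 0 ≤ t i) ∧ ∑ i, t i • g i = x}
      = ⋃ s : {s : Finset ι // LinearIndependent ℝ (fun i : s => g i)},
          (fun u : {i // i ∈ s.1} → ℝ => ∑ i, u i • g i.1) '' {u | ∀ i, 0 ≤ u i} := by
    ext x
    constructor
    · rintro ⟨t, ht, rfl⟩
      obtain ⟨s, hli, u, hu0, husupp, hsum⟩ := conic_caratheodory g _ t le_rfl ht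
      refine Set.mem_iUnion.mpr ⟨⟨s, hli⟩, fun i => u i.1, fun i => hu0 i.1, ?_⟩
      rw [← hsum]
      show ∑ i : {i // i ∈ s}, u i.1 • g i.1 = _
      rw [Finset.sum_coe_sort s (fun i => u i • g i)]
      exact Finset.sum_subset (Finset.subset_univ s)
        (fun i _ hi => by rw [husupp i hi, zero_smul])
    · intro hx
      obtain ⟨s, u, hu, rfl⟩ := Set.mem_iUnion.mp hx
      refine ⟨fun i => if h : i ∈ s.1 then u ⟨i, h⟩ else 0, fun i => ?_, ?_⟩
      · by_cases h : i ∈ s.1 <;> simp [h]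
        exact hu _
      · rw [← Finset.sum_subset (Finset.subset_univ s.1)
          (fun i _ hi => by simp [dif_neg hi])]
        rw [← Finset.sum_attach s.1
          (fun i => (if h : i ∈ s.1 then u ⟨i, h⟩ else 0) • g i)]
        refine Finset.sum_congr rfl fun i _ => ?_
        simp [dif_pos i.2]
  rw [hset]
  refine isClosed_iUnion_of_finite fun s => ?_
  let L : ({i // i ∈ s.1} → ℝ) →ₗ[ℝ] H :=
    { toFun := fun u => ∑ i, u i • g i.1
      map_add' := fun u v => by simp [add_smul, Finset.sum_add_distrib]
      map_smul' := fun c u => by simp [mul_smul, Finset.smul_sum]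
      }
  have hinj : LinearMap.ker L = ⊥ := by
    rw [LinearMap.ker_eq_bot']
    intro u hu
    have := Fintype.linearIndependent_iff.mp s.2 u hu
    funext i
    exact this i
  have hemb := L.isClosedEmbedding_of_injective hinj
  have hcl : IsClosed {u : {i // i ∈ s.1} → ℝ | ∀ i, 0 ≤ u i} := by
    have : {u : {i // i ∈ s.1} → ℝ | ∀ i, 0 ≤ u i}
        = ⋂ i, (fun u : {i // i ∈ s.1} → ℝ => u i) ⁻¹' Set.Ici 0 := by
      ext u; simp [Set.mem_iInter]
    rw [this]
    exact isClosed_iInter fun i => isClosed_Ici.preimage (continuous_apply i)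
  exact hemb.isClosedMap _ hcl

/-- Farkas' lemma, cone version. -/
lemma farkas_cone {ι H : Type*} [Fintype ι] [DecidableEq ι]
    [NormedAddCommGroup H] [InnerProductSpace ℝ H] [FiniteDimensional ℝ H]
    (g : ι → H) (v : H)
    (h : ∀ y : H, (∀ i, 0 ≤ ⟪g i, y⟫) → 0 ≤ ⟪v, y⟫) :
    ∃ t : ι → ℝ, (∀ i, 0 ≤ t i) ∧ ∑ i, t i • g i = v := by
  by_contra hv
  set K : ConvexCone ℝ H :=
    { carrier := {x : H | ∃ t : ι → ℝ, (∀ i, 0 ≤ t i) ∧ ∑ i, t i • g i = x}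
      smul_mem' := by
        rintro c hc x ⟨t, ht, rfl⟩
        exact ⟨fun i => c * t i, fun i => mul_nonneg hc.le (ht i),
          by simp [mul_smul, Finset.smul_sum]⟩
      add_mem' := by
        rintro x ⟨t, ht, rfl⟩ y ⟨u, hu, rfl⟩
        exact ⟨fun i => t i + u i, fun i => add_nonneg (ht i) (hu i),
          by simp [add_smul, Finset.sum_add_distrib]⟩ } with hK
  have hvK : v ∉ K := hv
  have hne : (K : Set H).Nonempty := ⟨0, 0, fun i => le_refl 0, by simp⟩
  have hcl : IsClosed (K : Set H) := isClosed_fg_cone g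
  obtain ⟨y, hy1, hy2⟩ :=
    ProperCone.hyperplane_separation' (E := H)
      ({ carrier := (K : Set H), add_mem' := fun ha hb => K.add_mem ha hb,
         zero_mem' := ⟨0, fun i => le_refl 0, by simp⟩,
         smul_mem' := by
           rintro c x ⟨t, ht, rfl⟩
           exact ⟨fun i => (c : ℝ) * t i, fun i => mul_nonneg c.2 (ht i),
             by simp [mul_smul, Finset.smul_sum, NNReal.smul_def]⟩,
         isClosed' := hcl } : ProperCone ℝ H) hvK
  have hgi : ∀ i, (g i) ∈ K := by
    intro i
    refine ⟨fun k => if k = i then 1 else 0, fun k => by positivity, ?_⟩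
    simp [ite_smul, Finset.sum_ite_eq']
  have h1 : 0 ≤ ⟪v, y⟫ := h y fun i => hy1 (g i) (hgi i)
  linarith

/-- First direction of the factorization theorem for LP formulations:
every size-`r` LP formulation of an optimization problem yields a size-`r`
LP factorization of the slack matrix `M(f,s) = C(f) − w^f(x^s)`. -/
theorem lp_formulation_to_lp_factorization {r d : ℕ} {F S : Type*} [Nonempty S]
    (A : Matrix (Fin r) (Fin d) ℝ) (b : Fin r → ℝ)
    (x : S → Fin d → ℝ) (hx : ∀ s j, A j ⬝ᵥ x s ≤ b j)
    (w : F → (Fin d → ℝ) → ℝ)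
    (hw : ∀ f, ∃ (c : ℝ) (v : Fin d → ℝ), ∀ y, w f y = c + v ⬝ᵥ y)
    (C : F → ℝ)
    (hC : ∀ f, ∀ y : Fin d → ℝ, (∀ j, A j ⬝ᵥ y ≤ b j) → w f y ≤ C f) :
    ∃ (T : F → Fin r → ℝ) (μ : F → ℝ),
      (∀ f j, 0 ≤ T f j) ∧ (∀ f, 0 ≤ μ f) ∧
      (∀ f s, C f - w f (x s) = ∑ j, T f j * (b j - A j ⬝ᵥ x s) + μ f) ∧
      (∀ j s, 0 ≤ b j - A j ⬝ᵥ x s) := by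
  classical
  obtain ⟨s₀⟩ := ‹Nonempty S›
  choose c v hcv using hw
  have key : ∀ f, ∃ t : Option (Fin r) → ℝ, (∀ i, 0 ≤ t i) ∧
      (∀ k : Fin d, ∑ j, t (some j) * A j k = v f k) ∧
      (t none * 1 + ∑ j, t (some j) * b j = C f - c f) := by
    intro f
    set g : Option (Fin r) → EuclideanSpace ℝ (Option (Fin d)) :=
      fun o => o.elim (WithLp.toLp 2 (fun i : Option (Fin d) => i.elim 1 (fun _ => 0)))
        (fun j => WithLp.toLp 2 (fun i : Option (Fin d) => i.elim (b j) (A j))) with hg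
    set vb : EuclideanSpace ℝ (Option (Fin d)) :=
      WithLp.toLp 2 (fun i : Option (Fin d) => i.elim (C f - c f) (v f)) with hvb
    have hproj : ∀ (z : EuclideanSpace ℝ (Option (Fin d))) (k : Option (Fin d)),
        EuclideanSpace.projₗ (𝕜 := ℝ) k z = z k := fun _ _ => rfl
    have hsmul : ∀ (a : ℝ) (z : EuclideanSpace ℝ (Option (Fin d))) (k : Option (Fin d)),
        (a • z) k = a * z k := fun _ _ _ => rfl
    have hdual : ∀ y : EuclideanSpace ℝ (Option (Fin d)),
        (∀ i, 0 ≤ ⟪g i, y⟫) → 0 ≤ ⟪vb, y⟫ := by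
      intro y hy
      set s := y none with hsdef
      set yv : Fin d → ℝ := fun k => y (some k) with hyv
      have hynone : 0 ≤ s := by
        have := hy none
        simpa [hg, PiLp.inner_apply, RCLike.inner_apply, Fintype.sum_option] using this
      have hyj : ∀ j, 0 ≤ b j * s + A j ⬝ᵥ yv := by
        intro j
        have := hy (some j)
        simpa [hg, PiLp.inner_apply, RCLike.inner_apply, Fintype.sum_option,
          dotProduct, hyv, mul_comm] using this
      have hgoal : 0 ≤ (C f - c f) * s + v f ⬝ᵥ yv := by
        rcases eq_or_lt_of_le hynone with hs | hs
        · -- s = 0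
          have hAy : ∀ j, 0 ≤ A j ⬝ᵥ yv := fun j => by
            have := hyj j; rw [← hs] at this; simpa using this
          by_contra hneg
          push_neg at hneg
          have hD : v f ⬝ᵥ yv < 0 := by rw [← hs] at hneg; simpa using hneg
          have hx0 : c f + v f ⬝ᵥ x s₀ ≤ C f := by
            have := hC f (x s₀) (hx s₀); rwa [hcv f (x s₀)] at this
          set D := v f ⬝ᵥ yv with hDdef
          set lam : ℝ := (C f - c f - v f ⬝ᵥ x s₀ + 1) / (-D) with hlamdef
          have hlampos : 0 < lam := div_pos (by linarith) (by linarith)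
          have hfeas : ∀ j, A j ⬝ᵥ (x s₀ - lam • yv) ≤ b j := by
            intro j
            rw [dotProduct_sub, dotProduct_smul, smul_eq_mul]
            have h1 := mul_nonneg hlampos.le (hAy j)
            have h2 := hx s₀ j
            linarith
          have hch := hC f _ hfeas
          rw [hcv f _, dotProduct_sub, dotProduct_smul, smul_eq_mul] at hch
          have hcancel : lam * (-D) = C f - c f - v f ⬝ᵥ x s₀ + 1 := by
            rw [hlamdef, div_mul_cancel₀ _ (ne_of_gt (by linarith : (0:ℝ) < -D))]
          nlinarith
        · -- 0 < s
          have hfeas : ∀ j, A j ⬝ᵥ ((-(1/s)) • yv) ≤ b j := by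
            intro j
            rw [dotProduct_smul, smul_eq_mul]
            have h1 := hyj j
            have hmul : (-(1/s)) * (A j ⬝ᵥ yv) * s = -(A j ⬝ᵥ yv) := by field_simp
            nlinarith
          have hch := hC f _ hfeas
          rw [hcv f _, dotProduct_smul, smul_eq_mul] at hch
          have hmul2 : (-(1/s)) * (v f ⬝ᵥ yv) * s = -(v f ⬝ᵥ yv) := by field_simp
          nlinarith [mul_le_mul_of_nonneg_right hch hs.le]
      have : ⟪vb, y⟫ = (C f - c f) * s + v f ⬝ᵥ yv := by
        simp [hvb, PiLp.inner_apply, RCLike.inner_apply, Fintype.sum_option,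
          dotProduct, hyv, hsdef, mul_comm]
      rw [this]
      exact hgoal
    obtain ⟨t, ht0, htsum⟩ := farkas_cone g vb hdual
    refine ⟨t, ht0, fun k => ?_, ?_⟩
    · have hk := congrArg (EuclideanSpace.projₗ (𝕜 := ℝ) (some k)) htsum
      rw [map_sum] at hk
      simp only [hproj, hsmul] at hk
      rw [Fintype.sum_option] at hk
      have hgn : g none (some k) = 0 := rfl
      have hgj : ∀ j, g (some j) (some k) = A j k := fun j => rfl
      have hvbk : vb (some k) = v f k := rfl
      simp only [hgn, hgj, hvbk, mul_zero, zero_add] at hk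
      exact hk
    · have hk := congrArg (EuclideanSpace.projₗ (𝕜 := ℝ) none) htsum
      rw [map_sum] at hk
      simp only [hproj, hsmul] at hk
      rw [Fintype.sum_option] at hk
      have hgn : g none none = 1 := rfl
      have hgj : ∀ j, g (some j) none = b j := fun j => rfl
      have hvbk : vb none = C f - c f := rfl
      simp only [hgn, hgj, hvbk] at hk
      exact hk
  choose t ht0 htA htb using key
  refine ⟨fun f j => t f (some j), fun f => t f none,
    fun f j => ht0 f (some j), fun f => ht0 f none, ?_,
    fun j s => sub_nonneg.mpr (hx s j)⟩
  intro f s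
  rw [hcv f (x s)]
  have hswap : ∑ j, t f (some j) * (A j ⬝ᵥ x s) = v f ⬝ᵥ x s := by
    calc ∑ j, t f (some j) * (A j ⬝ᵥ x s)
        = ∑ j, ∑ i, t f (some j) * A j i * x s i := by
          simp [dotProduct, Finset.mul_sum, mul_assoc]
      _ = ∑ i, (∑ j, t f (some j) * A j i) * x s i := by
          rw [Finset.sum_comm]
          simp [Finset.sum_mul]
      _ = v f ⬝ᵥ x s := by
          simp_rw [fun i => htA f i]
          simp [dotProduct]
  have hb' := htb f
  simp only [mul_sub]
  rw [Finset.sum_sub_distrib, hswap]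
  linarith
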